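/- For every ε with 0 < ε < 1, there exists n₀ such that for all n ≥ n₀ there exist 2-log-sparse sets S₁, ..., Sₙ of positive integers whose sumset S₁ + ⋯ + Sₙ contains an arithmetic progression of length at least n^{(1-ε)²·n}. -/

import Mathlib

/-- A set of positive integers is `C`-log-sparse if every dyadic interval `[x, 2x)`
contains at most `C` of its elements. -/
def LogSparse (C : ℕ) (T : Set ℕ) : Prop :=
  (∀ t ∈ T, 0 < t) ∧ ∀ x : ℕ, 0 < x → (T ∩ Set.Ico x (2 * x)).ncard ≤ C

/-- The sumset `S 0 + S 1 + ⋯ + S (n-1)`. -/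
def sumSet {n : ℕ} (S : Fin n → Set ℕ) : Set ℕ :=
  {s | ∃ x : Fin n → ℕ, (∀ i, x i ∈ S i) ∧ ∑ i, x i = s}

/-- The arithmetic progression `{a, a+d, …, a+(k-1)d}` of length `k`. -/
def AP (a d k : ℕ) : Set ℕ := {m | ∃ i < k, m = a + i * d}

open Finset Filter

lemma sum_pow_concat (s₁ s₂ : ℕ) (f₁ f₂ : ℕ → ℕ) :
    ∑ q ∈ Finset.range (s₁ + s₂), 2 ^ (if q < s₁ then f₁ q else f₂ (q - s₁)) =
      ∑ q ∈ Finset.range s₁, 2 ^ f₁ q + ∑ q ∈ Finset.range s₂, 2 ^ f₂ q := by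
  rw [Finset.sum_range_add]
  congr 1
  · exact Finset.sum_congr rfl fun q hq => by rw [if_pos (Finset.mem_range.mp hq)]
  · exact Finset.sum_congr rfl fun q hq => by
      rw [if_neg (by omega), Nat.add_sub_cancel_left]

lemma pow_eq_sum_pow (e : ℕ) : ∀ s, 1 ≤ s → s ≤ 2 ^ e →
    ∃ f : ℕ → ℕ, ∑ q ∈ Finset.range s, 2 ^ f q = 2 ^ e := by
  induction e with
  | zero =>
    intro s h1 h2
    have : s = 1 := by simpa using le_antisymm h2 h1
    subst this
    exact ⟨fun _ => 0, by simp⟩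
  | succ e ih =>
    intro s h1 h2
    rcases eq_or_lt_of_le h1 with h | h
    · exact ⟨fun _ => e + 1, by simp [← h]⟩
    · have h2e : 1 ≤ 2 ^ e := Nat.one_le_two_pow
      have hps : 2 ^ (e + 1) = 2 ^ e + 2 ^ e := by rw [pow_succ]; ring
      set s₁ := min (s - 1) (2 ^ e) with hs₁
      set s₂ := s - s₁ with hs₂
      have hs₁1 : 1 ≤ s₁ := by omega
      have hs₁e : s₁ ≤ 2 ^ e := min_le_right _ _
      have hs₂1 : 1 ≤ s₂ := by omega
      have hs₂e : s₂ ≤ 2 ^ e := by omega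
      obtain ⟨f₁, hf₁⟩ := ih s₁ hs₁1 hs₁e
      obtain ⟨f₂, hf₂⟩ := ih s₂ hs₂1 hs₂e
      refine ⟨fun q => if q < s₁ then f₁ q else f₂ (q - s₁), ?_⟩
      have hss : s = s₁ + s₂ := by omega
      rw [hss, sum_pow_concat, hf₁, hf₂]
      omega

lemma exists_rep_pow : ∀ m s : ℕ, Nat.log 2 m < s → s ≤ m →
    ∃ f : ℕ → ℕ, ∑ q ∈ Finset.range s, 2 ^ f q = m := by
  intro m
  induction m using Nat.strong_induction_on with
  | _ m ih =>
    intro s hlog hsm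
    rcases eq_or_lt_of_le hsm with rfl | hlt
    · exact ⟨fun _ => 0, by simp⟩
    · have hs1 : 1 ≤ s := by omega
      have hm2 : 2 ≤ m := by omega
      set e := Nat.log 2 m with hedef
      have he1 : 1 ≤ e := Nat.log_pos (by norm_num) hm2
      have hpe : 2 ^ e ≤ m := Nat.pow_log_le_self 2 (by omega)
      have hpe' : m < 2 ^ (e + 1) := Nat.lt_pow_succ_log_self (by norm_num) m
      have hpes : 2 ^ (e + 1) = 2 ^ e + 2 ^ e := by rw [pow_succ]; ring
      have h2e : 2 ≤ 2 ^ e := by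
        calc 2 = 2 ^ 1 := (pow_one 2).symm
        _ ≤ 2 ^ e := Nat.pow_le_pow_right (by norm_num) he1
      set m' := m - 2 ^ e with hm'def
      by_cases hm'0 : m' = 0
      · have hme : m = 2 ^ e := by omega
        rw [hme]
        exact pow_eq_sum_pow e s hs1 (by omega)
      · have he' : Nat.log 2 m' < e := Nat.log_lt_of_lt_pow hm'0 (by omega)
        have hlm' : Nat.log 2 m' < 2 ^ Nat.log 2 m' := Nat.lt_two_pow_self
        have hplm' : 2 ^ Nat.log 2 m' ≤ m' := Nat.pow_log_le_self 2 hm'0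
        set s₂ := max (Nat.log 2 m' + 1) (s - 2 ^ e) with hs₂def
        set s₁ := s - s₂ with hs₁def
        have hs₂m' : s₂ ≤ m' := by omega
        have hs₂log : Nat.log 2 m' < s₂ := by omega
        have hs₁1 : 1 ≤ s₁ := by omega
        have hs₁e : s₁ ≤ 2 ^ e := by omega
        obtain ⟨f₁, hf₁⟩ := pow_eq_sum_pow e s₁ hs₁1 hs₁e
        obtain ⟨f₂, hf₂⟩ := ih m' (by omega) s₂ hs₂log hs₂m'
        refine ⟨fun q => if q < s₁ then f₁ q else f₂ (q - s₁), ?_⟩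
        have hss : s = s₁ + s₂ := by omega
        rw [hss, sum_pow_concat, hf₁, hf₂]
        omega

lemma sum_digits_mod (b : ℕ) (hb : 0 < b) (t : ℕ) : ∀ m,
    ∑ p ∈ Finset.range m, (t / b ^ p % b) * b ^ p = t % b ^ m := by
  intro m
  induction m with
  | zero => simp [Nat.mod_one]
  | succ m ih =>
    rw [Finset.sum_range_succ, ih]
    have hbm : 0 < b ^ m := Nat.pow_pos (n := m) hb
    have h3 : t / b ^ m / b = t / b ^ (m + 1) := by
      rw [Nat.div_div_eq_div_mul, ← pow_succ]
    have key : t = b ^ (m + 1) * (t / b ^ (m + 1)) + (t / b ^ m % b * b ^ m + t % b ^ m) := by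
      calc t = b ^ m * (t / b ^ m) + t % b ^ m := (Nat.div_add_mod _ _).symm
        _ = b ^ m * (b * (t / b ^ m / b) + t / b ^ m % b) + t % b ^ m := by
            rw [Nat.div_add_mod, Nat.div_add_mod, Nat.div_add_mod]
        _ = b ^ m * (b * (t / b ^ (m + 1)) + t / b ^ m % b) + t % b ^ m := by rw [h3]
        _ = b ^ (m + 1) * (t / b ^ (m + 1)) + (t / b ^ m % b * b ^ m + t % b ^ m) := by
            rw [pow_succ]; ring
    have hX : t / b ^ m % b * b ^ m + t % b ^ m < b ^ (m + 1) := by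
      have h5 : t % b ^ m < b ^ m := Nat.mod_lt _ hbm
      have h6 : t / b ^ m % b < b := Nat.mod_lt _ hb
      calc t / b ^ m % b * b ^ m + t % b ^ m < t / b ^ m % b * b ^ m + b ^ m := by omega
        _ = (t / b ^ m % b + 1) * b ^ m := by ring
        _ ≤ b * b ^ m := Nat.mul_le_mul_right _ (by omega)
        _ = b ^ (m + 1) := by rw [pow_succ]; ring
    calc t % b ^ m + t / b ^ m % b * b ^ m
        = t / b ^ m % b * b ^ m + t % b ^ m := by ring
      _ = (b ^ (m + 1) * (t / b ^ (m + 1)) + (t / b ^ m % b * b ^ m + t % b ^ m)) % b ^ (m + 1) := by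
          rw [Nat.mul_add_mod, Nat.mod_eq_of_lt hX]
      _ = t % b ^ (m + 1) := by rw [← key]

lemma sparse_of_growth (g : ℕ → ℕ) (U : Set ℕ) (hmono : Monotone g)
    (hgrow : ∀ c, 2 * g c ≤ g (c + 2)) (x : ℕ) :
    ((g '' U) ∩ Set.Ico x (2 * x)).ncard ≤ 2 := by
  classical
  by_cases h : ∃ c, c ∈ U ∧ g c ∈ Set.Ico x (2 * x)
  · set c0 := Nat.find h with hc0def
    obtain ⟨hc0U, hc0I⟩ := Nat.find_spec h
    have hsub : (g '' U) ∩ Set.Ico x (2 * x) ⊆ {g c0, g (c0 + 1)} := by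
      rintro y ⟨⟨c, hcU, rfl⟩, hyI⟩
      have hge : c0 ≤ c := Nat.find_min' h ⟨hcU, hyI⟩
      rcases lt_or_ge c (c0 + 2) with hlt | hge2
      · have : c = c0 ∨ c = c0 + 1 := by omega
        rcases this with rfl | rfl
        · exact Or.inl rfl
        · exact Or.inr rfl
      · exfalso
        have h1 : x ≤ g c0 := hc0I.1
        have h2 : 2 * g c0 ≤ g (c0 + 2) := hgrow c0
        have h3 : g (c0 + 2) ≤ g c := hmono hge2
        have h4 : g c < 2 * x := hyI.2
        omega
    calc ((g '' U) ∩ Set.Ico x (2 * x)).ncard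
        ≤ ({g c0, g (c0 + 1)} : Set ℕ).ncard :=
          Set.ncard_le_ncard hsub (Set.toFinite _)
      _ ≤ 2 := by
          have h1 := Set.ncard_insert_le (g c0) ({g (c0 + 1)} : Set ℕ)
          simpa using h1
  · have hempty : (g '' U) ∩ Set.Ico x (2 * x) = ∅ := by
      ext y
      simp only [Set.mem_inter_iff, Set.mem_image, Set.mem_empty_iff_false, iff_false, not_and]
      rintro ⟨c, hc, rfl⟩ hI
      exact h ⟨c, hc, hI⟩
    simp [hempty]

theorem ap_in_sumset_lower (ε : ℝ) (hε0 : 0 < ε) (hε1 : ε < 1) :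
    ∃ n₀ : ℕ, ∀ n : ℕ, n₀ ≤ n →
      ∃ S : Fin n → Set ℕ, (∀ i, LogSparse 2 (S i)) ∧
        ∃ a d k : ℕ, 1 ≤ d ∧ (n : ℝ) ^ ((1 - ε) ^ 2 * (n : ℝ)) ≤ (k : ℝ) ∧
          AP a d k ⊆ sumSet S := by
  have h1ε : (0:ℝ) < 1 - ε := by linarith
  -- eventual facts
  have hBtend : Tendsto (fun n : ℕ => ((n:ℝ)) ^ (1 - ε)) atTop atTop :=
    (tendsto_rpow_atTop h1ε).comp tendsto_natCast_atTop_atTop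
  set M := max 2 (⌈(1 - ε)⁻¹⌉₊ + 1) with hMdef
  have hF1 : ∀ᶠ n : ℕ in atTop, M ≤ ⌈(n : ℝ) ^ (1 - ε)⌉₊ := by
    filter_upwards [hBtend.eventually_ge_atTop (M : ℝ)] with n hn
    exact_mod_cast hn.trans (Nat.le_ceil _)
  have hlogtend : Tendsto (fun n : ℕ => Real.log n / n) atTop (nhds 0) :=
    (Real.isLittleO_log_id_atTop.tendsto_div_nhds_zero).comp tendsto_natCast_atTop_atTop
  have hrt : Tendsto (fun n : ℕ => ((n:ℝ)) ^ (-ε)) atTop (nhds 0) :=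
    (tendsto_rpow_neg_atTop hε0).comp tendsto_natCast_atTop_atTop
  have hq1 : Tendsto (fun n : ℕ => ((n:ℝ)) ^ (1 - ε) / n) atTop (nhds 0) := by
    apply hrt.congr'
    filter_upwards [eventually_ge_atTop 1] with n hn
    have hn0 : (0:ℝ) < n := by exact_mod_cast hn
    rw [← Real.rpow_one (n:ℝ)]
    nth_rewrite 2 [Real.rpow_one (n:ℝ)]
    rw [← Real.rpow_sub hn0]
    norm_num
  have clog : Tendsto (fun n : ℕ => Real.log n / (Real.log 2 * n)) atTop (nhds 0) := by
    have h := hlogtend.div_const (Real.log 2)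
    rw [zero_div] at h
    simp only [div_div] at h
    apply h.congr
    intro n
    rw [mul_comm]
  have c4 : Tendsto (fun n : ℕ => (4:ℝ) / n) atTop (nhds 0) :=
    tendsto_const_div_atTop_nhds_zero_nat 4
  have hq4 : Tendsto
      (fun n : ℕ => ((n:ℝ)) ^ (1 - ε) / n + Real.log n / (Real.log 2 * n) + 4 / n)
      atTop (nhds 0) := by
    simpa using (hq1.add clog).add c4
  have hF2 : ∀ᶠ n : ℕ in atTop,
      ((⌈(n : ℝ) ^ (1 - ε)⌉₊ : ℝ) + (Nat.log 2 n : ℝ) + 2) ≤ ε * n := by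
    filter_upwards [hq4.eventually_lt_const hε0, eventually_ge_atTop 1] with n hlt hn1
    have hn0 : (0:ℝ) < n := by exact_mod_cast hn1
    have hceil : ((⌈(n : ℝ) ^ (1 - ε)⌉₊ : ℝ)) ≤ (n:ℝ) ^ (1 - ε) + 1 :=
      le_of_lt (Nat.ceil_lt_add_one (Real.rpow_nonneg (by positivity) _))
    have hnatlog : ((Nat.log 2 n : ℝ)) ≤ Real.log n / Real.log 2 := by
      have := Real.natLog_le_logb n 2
      rwa [Real.logb] at this
    have hdiv : ((n:ℝ) ^ (1 - ε) + Real.log n / Real.log 2 + 4) / n < ε := by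
      calc ((n:ℝ) ^ (1 - ε) + Real.log n / Real.log 2 + 4) / n
          = (n:ℝ) ^ (1 - ε) / n + Real.log n / (Real.log 2 * n) + 4 / n := by
            rw [add_div, add_div, div_div]
        _ < ε := hlt
    have hmul : (n:ℝ) ^ (1 - ε) + Real.log n / Real.log 2 + 4 < ε * n :=
      (div_lt_iff₀ hn0).mp hdiv
    linarith
  obtain ⟨n₀, hn₀⟩ := eventually_atTop.mp ((hF1.and hF2).and (eventually_ge_atTop 1))
  refine ⟨n₀, fun n hn => ?_⟩
  obtain ⟨⟨hM, hεn⟩, hn1⟩ := hn₀ n hn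
  set b := ⌈(n : ℝ) ^ (1 - ε)⌉₊ with hbdef
  have hb2 : 2 ≤ b := le_trans (le_max_left _ _) hM
  have hbinv : ⌈(1 - ε)⁻¹⌉₊ + 1 ≤ b := le_trans (le_max_right _ _) hM
  set s := b + Nat.log 2 n + 2 with hsdef
  have hsR : (s : ℝ) ≤ ε * n := by
    rw [hsdef]
    push_cast
    exact hεn
  have hsn : s < n := by
    have hn0 : (0:ℝ) < n := by exact_mod_cast hn1
    have h2 : ε * n < 1 * n := mul_lt_mul_of_pos_right hε1 hn0
    have : (s:ℝ) < (n:ℝ) := by linarith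
    exact_mod_cast this
  set m' := n - s with hm'def
  have hm'n : m' + s = n := by omega
  have hm'R : (1 - ε) * n ≤ (m' : ℝ) := by
    have hc : (m':ℝ) = (n:ℝ) - (s:ℝ) := by
      rw [hm'def, Nat.cast_sub hsn.le]
    rw [hc]; linarith
  have hm'pos : 0 < m' := by omega
  set A := b ^ (n + 2) with hAdef
  have hApos : 0 < A := Nat.pow_pos (by omega)
  set P := m' * 2 ^ (b - 1) with hPdef
  set H := m' * 2 ^ b with hHdef
  have h2b' : 2 ^ b = 2 ^ (b - 1) + 2 ^ (b - 1) := by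
    conv_lhs => rw [show b = b - 1 + 1 by omega]
    rw [pow_succ]
    omega
  have hH2 : H = P + P := by rw [hHdef, hPdef, h2b']; ring
  have hblt : b ≤ 2 ^ (b - 1) := by
    have := Nat.lt_two_pow_self (n := b - 1)
    omega
  have hkey : n ≤ P := by
    have h2b : ((1 - ε)⁻¹ : ℝ) ≤ ((2 ^ (b - 1) : ℕ) : ℝ) := by
      have hc : ((1 - ε)⁻¹ : ℝ) ≤ (⌈(1 - ε)⁻¹⌉₊ : ℝ) := Nat.le_ceil _
      have hb' : ⌈(1 - ε)⁻¹⌉₊ ≤ 2 ^ (b - 1) := by omega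
      calc ((1 - ε)⁻¹ : ℝ) ≤ (⌈(1 - ε)⁻¹⌉₊ : ℝ) := hc
        _ ≤ ((2 ^ (b - 1) : ℕ) : ℝ) := by exact_mod_cast hb'
    have hreal : (n : ℝ) ≤ (m' : ℝ) * ((2 ^ (b - 1) : ℕ) : ℝ) := by
      calc (n : ℝ) = ((1 - ε) * n) * (1 - ε)⁻¹ := by field_simp
        _ ≤ (m' : ℝ) * ((2 ^ (b - 1) : ℕ) : ℝ) :=
          mul_le_mul hm'R h2b (by positivity) (by positivity)
    rw [hPdef]
    exact_mod_cast hreal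
  -- the size bound
  have hsize : (n : ℝ) ^ ((1 - ε) ^ 2 * (n:ℝ)) ≤ ((b ^ m' : ℕ) : ℝ) := by
    have hn1R : (1:ℝ) ≤ n := by exact_mod_cast hn1
    have e1 : (1 - ε) ^ 2 * (n:ℝ) ≤ (1 - ε) * (m' : ℝ) := by
      have h := mul_le_mul_of_nonneg_left hm'R h1ε.le
      calc (1 - ε) ^ 2 * (n:ℝ) = (1 - ε) * ((1 - ε) * n) := by ring
        _ ≤ (1 - ε) * (m' : ℝ) := h
    calc (n:ℝ) ^ ((1 - ε) ^ 2 * (n:ℝ)) ≤ (n:ℝ) ^ ((1 - ε) * (m':ℝ)) :=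
          Real.rpow_le_rpow_of_exponent_le hn1R e1
      _ = ((n:ℝ) ^ (1 - ε)) ^ (m' : ℕ) := by
          rw [Real.rpow_mul (by positivity), Real.rpow_natCast]
      _ ≤ ((b : ℕ) : ℝ) ^ (m' : ℕ) :=
          pow_le_pow_left₀ (Real.rpow_nonneg (by positivity) _) (Nat.le_ceil _) m'
      _ = ((b ^ m' : ℕ) : ℝ) := by push_cast; ring
  refine ⟨fun i => if (i : ℕ) < m'
      then {y | ∃ c < b, y = A * 2 ^ c + c * b ^ (i : ℕ)}
      else {y | ∃ e : ℕ, y = A * 2 ^ e}, ?_, A * H, 1, b ^ m', le_refl 1, hsize, ?_⟩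
  · -- sparsity
    intro i
    by_cases hi : (i : ℕ) < m'
    · simp only [if_pos hi]
      constructor
      · rintro t ⟨c, hc, rfl⟩
        have h1 : 0 < A * 2 ^ c := Nat.mul_pos hApos (Nat.two_pow_pos c)
        omega
      · intro x hx
        have himg : {y | ∃ c < b, y = A * 2 ^ c + c * b ^ (i:ℕ)}
            = (fun c => A * 2 ^ c + c * b ^ (i:ℕ)) '' Set.Iio b := by
          ext y
          simp only [Set.mem_setOf_eq, Set.mem_image, Set.mem_Iio]
          constructor
          · rintro ⟨c, hc, rfl⟩; exact ⟨c, hc, rfl⟩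
          · rintro ⟨c, hc, rfl⟩; exact ⟨c, hc, rfl⟩
        rw [himg]
        apply sparse_of_growth
        · intro c c' hcc
          exact Nat.add_le_add
            (Nat.mul_le_mul_left _ (Nat.pow_le_pow_right (by norm_num) hcc))
            (Nat.mul_le_mul_right _ hcc)
        · intro c
          have hcc : c ≤ 2 ^ c := (Nat.lt_two_pow_self (n := c)).le
          have hbA : b ^ (i:ℕ) ≤ A := by
            rw [hAdef]
            exact Nat.pow_le_pow_right (by omega) (by omega)
          have h1 : c * b ^ (i:ℕ) ≤ 2 ^ c * A := Nat.mul_le_mul hcc hbA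
          have h1' : c * b ^ (i:ℕ) ≤ A * 2 ^ c := by rw [mul_comm A]; exact h1
          have e1 : A * 2 ^ (c + 2) = 4 * (A * 2 ^ c) := by ring
          have e2 : (c + 2) * b ^ (i:ℕ) = c * b ^ (i:ℕ) + 2 * b ^ (i:ℕ) := by ring
          rw [e1, e2]
          have hz : 0 ≤ 2 * b ^ (i:ℕ) := Nat.zero_le _
          have hz2 : 0 ≤ A * 2 ^ c := Nat.zero_le _
          linarith
    · simp only [if_neg hi]
      constructor
      · rintro t ⟨e, rfl⟩
        exact Nat.mul_pos hApos (Nat.two_pow_pos e)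
      · intro x hx
        have himg : {y | ∃ e : ℕ, y = A * 2 ^ e} = (fun e => A * 2 ^ e) '' Set.univ := by
          ext y
          simp only [Set.mem_setOf_eq, Set.image_univ, Set.mem_range]
          exact ⟨fun ⟨e, he⟩ => ⟨e, he.symm⟩, fun ⟨e, he⟩ => ⟨e, he.symm⟩⟩
        rw [himg]
        apply sparse_of_growth
        · intro e e' hee
          exact Nat.mul_le_mul_left _ (Nat.pow_le_pow_right (by norm_num) hee)
        · intro e
          have e1 : A * 2 ^ (e + 2) = 4 * (A * 2 ^ e) := by ring
          rw [e1]
          have hz : 0 ≤ A * 2 ^ e := Nat.zero_le _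
          nlinarith [hz]
  · -- AP containment
    rintro y ⟨j, hj, rfl⟩
    set c : ℕ → ℕ := fun p => j / b ^ p % b with hcdef
    have hcb : ∀ p, c p < b := fun p => Nat.mod_lt _ (by omega)
    have hdig : ∑ p ∈ Finset.range m', c p * b ^ p = j := by
      calc ∑ p ∈ Finset.range m', c p * b ^ p = j % b ^ m' :=
          sum_digits_mod b (by omega) j m'
        _ = j := Nat.mod_eq_of_lt hj
    set h := ∑ p ∈ Finset.range m', 2 ^ c p with hhdef
    have hhb : h ≤ P := by
      rw [hPdef]
      calc h ≤ ∑ _p ∈ Finset.range m', 2 ^ (b - 1) :=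
          Finset.sum_le_sum fun p _ =>
            Nat.pow_le_pow_right (by norm_num) (by have := hcb p; omega)
        _ = m' * 2 ^ (b - 1) := by
            rw [Finset.sum_const, Finset.card_range, smul_eq_mul]
    have hhH : h ≤ H := by omega
    set H' := H - h with hH'def
    have hH's : s ≤ H' := by omega
    have hH'lt : H' < 2 ^ s := by
      have hnlt : n < 2 ^ (Nat.log 2 n + 1) := Nat.lt_pow_succ_log_self (by norm_num) n
      calc H' ≤ H := Nat.sub_le _ _
        _ = m' * 2 ^ b := hHdef
        _ ≤ n * 2 ^ b := mul_le_mul_left (by omega) _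
        _ < 2 ^ (Nat.log 2 n + 1) * 2 ^ b :=
            mul_lt_mul_of_pos_right hnlt (Nat.two_pow_pos b)
        _ ≤ 2 ^ s := by
            rw [← pow_add]
            exact Nat.pow_le_pow_right (by norm_num) (by omega)
    have hH'log : Nat.log 2 H' < s := Nat.log_lt_of_lt_pow (by omega) hH'lt
    obtain ⟨f, hf⟩ := exists_rep_pow H' s hH'log hH's
    refine ⟨fun i => if (i:ℕ) < m'
        then A * 2 ^ c (i:ℕ) + c (i:ℕ) * b ^ (i:ℕ)
        else A * 2 ^ f ((i:ℕ) - m'), ?_, ?_⟩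
    · intro i
      by_cases hi : (i:ℕ) < m'
      · simp only [if_pos hi]
        exact ⟨c (i:ℕ), hcb _, rfl⟩
      · simp only [if_neg hi]
        exact ⟨f ((i:ℕ) - m'), rfl⟩
    · have hsum :
          (∑ i : Fin n, (if (i:ℕ) < m'
              then A * 2 ^ c (i:ℕ) + c (i:ℕ) * b ^ (i:ℕ)
              else A * 2 ^ f ((i:ℕ) - m')))
          = ∑ p ∈ Finset.range n, (if p < m'
              then A * 2 ^ c p + c p * b ^ p
              else A * 2 ^ f (p - m')) :=
        Fin.sum_univ_eq_sum_range
          (fun p => if p < m' then A * 2 ^ c p + c p * b ^ p else A * 2 ^ f (p - m')) n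
      rw [hsum, ← hm'n, Finset.sum_range_add]
      have hA1 : (∑ p ∈ Finset.range m', (if p < m'
            then A * 2 ^ c p + c p * b ^ p
            else A * 2 ^ f (p - m'))) = A * h + j := by
        calc (∑ p ∈ Finset.range m', (if p < m'
              then A * 2 ^ c p + c p * b ^ p
              else A * 2 ^ f (p - m')))
            = ∑ p ∈ Finset.range m', (A * 2 ^ c p + c p * b ^ p) :=
              Finset.sum_congr rfl fun p hp => if_pos (Finset.mem_range.mp hp)
          _ = (∑ p ∈ Finset.range m', A * 2 ^ c p) + ∑ p ∈ Finset.range m', c p * b ^ p :=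
              Finset.sum_add_distrib
          _ = A * h + j := by rw [← Finset.mul_sum, hdig, hhdef]
      have hA2 : (∑ q ∈ Finset.range s, (if m' + q < m'
            then A * 2 ^ c (m' + q) + c (m' + q) * b ^ (m' + q)
            else A * 2 ^ f (m' + q - m'))) = A * H' := by
        calc (∑ q ∈ Finset.range s, (if m' + q < m'
              then A * 2 ^ c (m' + q) + c (m' + q) * b ^ (m' + q)
              else A * 2 ^ f (m' + q - m')))
            = ∑ q ∈ Finset.range s, A * 2 ^ f q :=
              Finset.sum_congr rfl fun q hq => by
                rw [if_neg (by omega), Nat.add_sub_cancel_left]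
          _ = A * H' := by rw [← Finset.mul_sum, hf]
      rw [hA1, hA2]
      have hhh : h + H' = H := by omega
      calc A * h + j + A * H' = A * (h + H') + j := by ring
        _ = A * H + j * 1 := by rw [hhh]; ring
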